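/- As ξ → 0⁺, the projection-type matrix Φ(ξ) = Σ(ξ)^{-1}1(1'Σ(ξ)^{-1}1)^{-1}1'Σ(ξ)^{-1} converges entrywise to F = D^{-1}11'D^{-1}/(1'D^{-1}1)². -/

import Mathlib

open Matrix Filter Topology

/-- The all-ones vector. -/
def ones (n : ℕ) : Fin n → ℝ := fun _ => 1

lemma aux_mul_vecMulVec {n : ℕ} (A : Matrix (Fin n) (Fin n) ℝ) (a b : Fin n → ℝ) :
    A * vecMulVec a b = vecMulVec (A.mulVec a) b := by
  ext i j
  simp only [Matrix.mul_apply, vecMulVec_apply, mulVec, dotProduct, Finset.sum_mul]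
  exact Finset.sum_congr rfl fun k _ => by ring

lemma aux_vecMulVec_mul {n : ℕ} (B : Matrix (Fin n) (Fin n) ℝ) (a b : Fin n → ℝ) :
    vecMulVec a b * B = vecMulVec a (B.vecMul b) := by
  ext i j
  simp only [Matrix.mul_apply, vecMulVec_apply, vecMul, dotProduct, Finset.mul_sum]
  exact Finset.sum_congr rfl fun k _ => by ring

lemma aux_entry {n : ℕ} (A B : Matrix (Fin n) (Fin n) ℝ) (a b : Fin n → ℝ) (i j : Fin n) :
    (A * vecMulVec a b * B) i j = (A.mulVec a) i * (B.vecMul b) j := by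
  rw [aux_mul_vecMulVec, aux_vecMulVec_mul, vecMulVec_apply]

lemma aux_vecMulVec_mulVec {n : ℕ} (a b x : Fin n → ℝ) :
    (vecMulVec a b).mulVec x = (b ⬝ᵥ x) • a := by
  ext i
  simp only [vecMulVec_apply, mulVec, dotProduct, Pi.smul_apply, smul_eq_mul,
    Finset.sum_mul]
  exact Finset.sum_congr rfl fun k _ => by ring

/-- Φ(ξ) = Σ(ξ)⁻¹1(1'Σ(ξ)⁻¹1)⁻¹1'Σ(ξ)⁻¹ converges entrywise to
F = D⁻¹11'D⁻¹/(1'D⁻¹1)². -/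
theorem projection_matrix_tendsto_F
    (n : ℕ) (hn : 2 ≤ n)
    (D : Matrix (Fin n) (Fin n) ℝ) (hDsymm : D.IsSymm) (hDdet : IsUnit D.det)
    (hD1 : ones n ⬝ᵥ D⁻¹.mulVec (ones n) ≠ 0)
    (ν : ℝ → ℝ) (hνpos : ∀ ξ > 0, 0 < ν ξ)
    (hν0 : Tendsto ν (𝓝[>] 0) (𝓝 0))
    (Sg : ℝ → Matrix (Fin n) (Fin n) ℝ) (hpd : ∀ ξ > 0, (Sg ξ).PosDef)
    (E : ℝ → Matrix (Fin n) (Fin n) ℝ)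
    (hE : ∀ i j, Tendsto (fun ξ => E ξ i j) (𝓝[>] 0) (𝓝 0))
    (hdecomp : ∀ ξ > 0, Sg ξ = vecMulVec (ones n) (ones n) + ν ξ • (D + E ξ)) :
    ∀ i j,
      Tendsto
        (fun ξ =>
          ((ones n ⬝ᵥ (Sg ξ)⁻¹.mulVec (ones n))⁻¹ •
            ((Sg ξ)⁻¹ * vecMulVec (ones n) (ones n) * (Sg ξ)⁻¹)) i j)
        (𝓝[>] 0)
        (𝓝 ((((ones n ⬝ᵥ D⁻¹.mulVec (ones n)) ^ 2)⁻¹ •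
          (D⁻¹ * vecMulVec (ones n) (ones n) * D⁻¹)) i j)) := by
  intro i j
  set u : Fin n → ℝ := ones n with hu
  set M : ℝ → Matrix (Fin n) (Fin n) ℝ := fun ξ => D + E ξ with hM
  set s : ℝ → ℝ := fun ξ => u ⬝ᵥ (M ξ)⁻¹.mulVec u with hs
  set s0 : ℝ := u ⬝ᵥ D⁻¹.mulVec u with hs0
  -- convergence of M to D
  have hMtend : Tendsto M (𝓝[>] (0:ℝ)) (𝓝 D) := by
    refine tendsto_pi_nhds.2 ?_
    intro a
    rw [tendsto_pi_nhds]
    intro b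
    have := (hE a b).const_add (D a b)
    simpa [hM] using this
  -- convergence of inverses
  have hinvcont : ContinuousAt Inv.inv D := by
    apply continuousAt_matrix_inv
    rw [Ring.inverse_eq_inv']
    exact continuousAt_inv₀ hDdet.ne_zero
  have hMinv : Tendsto (fun ξ => (M ξ)⁻¹) (𝓝[>] (0:ℝ)) (𝓝 D⁻¹) :=
    hinvcont.tendsto.comp hMtend
  have hMinv_entry : ∀ a b, Tendsto (fun ξ => (M ξ)⁻¹ a b) (𝓝[>] (0:ℝ)) (𝓝 (D⁻¹ a b)) := by
    intro a b
    exact (((continuous_apply b).comp (continuous_apply a)).tendsto D⁻¹).comp hMinv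
  have hv : ∀ a, Tendsto (fun ξ => (M ξ)⁻¹.mulVec u a) (𝓝[>] (0:ℝ)) (𝓝 (D⁻¹.mulVec u a)) := by
    intro a
    simp only [mulVec, dotProduct]
    exact tendsto_finset_sum _ fun b _ => (hMinv_entry a b).mul tendsto_const_nhds
  have hstend : Tendsto s (𝓝[>] (0:ℝ)) (𝓝 s0) := by
    rw [hs, hs0]
    simp only [dotProduct]
    exact tendsto_finset_sum _ fun a _ => tendsto_const_nhds.mul (hv a)
  have hsνtend : Tendsto (fun ξ => s ξ + ν ξ) (𝓝[>] (0:ℝ)) (𝓝 s0) := by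
    simpa using hstend.add hν0
  -- eventually facts
  have hdettend : Tendsto (fun ξ => (M ξ).det) (𝓝[>] (0:ℝ)) (𝓝 D.det) :=
    (Continuous.matrix_det continuous_id).continuousAt.tendsto.comp hMtend
  have hev_det : ∀ᶠ ξ in 𝓝[>] (0:ℝ), IsUnit (M ξ).det := by
    filter_upwards [hdettend.eventually_ne hDdet.ne_zero] with ξ h
    exact h.isUnit
  have hev_sν : ∀ᶠ ξ in 𝓝[>] (0:ℝ), s ξ + ν ξ ≠ 0 := hsνtend.eventually_ne hD1
  have hev_pos : ∀ᶠ ξ in 𝓝[>] (0:ℝ), 0 < ξ := eventually_mem_nhdsWithin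
  -- the key identity
  have key : ∀ᶠ ξ in 𝓝[>] (0:ℝ),
      ((u ⬝ᵥ (Sg ξ)⁻¹.mulVec u)⁻¹ • ((Sg ξ)⁻¹ * vecMulVec u u * (Sg ξ)⁻¹)) i j
        = ((s ξ + ν ξ)⁻¹ * s ξ)⁻¹ *
            (((s ξ + ν ξ)⁻¹ * (M ξ)⁻¹.mulVec u i) * ((s ξ + ν ξ)⁻¹ * (M ξ)⁻¹.mulVec u j)) := by
    filter_upwards [hev_det, hev_sν, hev_pos] with ξ hdet hsν hξ
    have hSpd : (Sg ξ).PosDef := hpd ξ hξ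
    have hSdet : IsUnit (Sg ξ).det := hSpd.det_pos.ne'.isUnit
    -- Sg ξ *ᵥ ((M ξ)⁻¹ *ᵥ u) = (s ξ + ν ξ) • u
    have h1 : (Sg ξ).mulVec ((M ξ)⁻¹.mulVec u) = (s ξ + ν ξ) • u := by
      rw [hdecomp ξ hξ, add_mulVec, aux_vecMulVec_mulVec, smul_mulVec,
        mulVec_mulVec, Matrix.mul_nonsing_inv _ hdet, one_mulVec, add_smul]
    have h2 : (Sg ξ)⁻¹.mulVec u = (s ξ + ν ξ)⁻¹ • (M ξ)⁻¹.mulVec u := by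
      have h3 : (M ξ)⁻¹.mulVec u = (s ξ + ν ξ) • (Sg ξ)⁻¹.mulVec u := by
        calc (M ξ)⁻¹.mulVec u
            = (Sg ξ)⁻¹.mulVec ((Sg ξ).mulVec ((M ξ)⁻¹.mulVec u)) := by
              rw [mulVec_mulVec, Matrix.nonsing_inv_mul _ hSdet, one_mulVec]
          _ = (s ξ + ν ξ) • (Sg ξ)⁻¹.mulVec u := by rw [h1, mulVec_smul]
      rw [h3, smul_smul, inv_mul_cancel₀ hsν, one_smul]
    have hsymm : (Sg ξ)⁻¹.vecMul u = (Sg ξ)⁻¹.mulVec u := by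
      have : ((Sg ξ)⁻¹)ᵀ = (Sg ξ)⁻¹ := by
        have h := hSpd.inv.isHermitian
        simpa [Matrix.IsHermitian, Matrix.conjTranspose_eq_transpose_of_trivial] using h

      rw [← mulVec_transpose, this]
    have hs' : u ⬝ᵥ (Sg ξ)⁻¹.mulVec u = (s ξ + ν ξ)⁻¹ * s ξ := by
      rw [h2, dotProduct_smul, smul_eq_mul]
    rw [Matrix.smul_apply, aux_entry, hsymm, hs', h2]
    simp only [Pi.smul_apply, smul_eq_mul]
  -- final limit
  have hlim : Tendsto
      (fun ξ => ((s ξ + ν ξ)⁻¹ * s ξ)⁻¹ *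
        (((s ξ + ν ξ)⁻¹ * (M ξ)⁻¹.mulVec u i) * ((s ξ + ν ξ)⁻¹ * (M ξ)⁻¹.mulVec u j)))
      (𝓝[>] (0:ℝ))
      (𝓝 ((s0⁻¹ * s0)⁻¹ * ((s0⁻¹ * D⁻¹.mulVec u i) * (s0⁻¹ * D⁻¹.mulVec u j)))) := by
    have hinvν : Tendsto (fun ξ => (s ξ + ν ξ)⁻¹) (𝓝[>] (0:ℝ)) (𝓝 s0⁻¹) :=
      hsνtend.inv₀ hD1
    exact (((hinvν.mul hstend).inv₀ (by simpa [inv_mul_cancel₀ hD1] using one_ne_zero)).mul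
      (((hinvν.mul (hv i))).mul ((hinvν.mul (hv j)))))
  have htarget :
      (((u ⬝ᵥ D⁻¹.mulVec u) ^ 2)⁻¹ • (D⁻¹ * vecMulVec u u * D⁻¹)) i j
        = (s0⁻¹ * s0)⁻¹ * ((s0⁻¹ * D⁻¹.mulVec u i) * (s0⁻¹ * D⁻¹.mulVec u j)) := by
    have hDsymm' : (D⁻¹)ᵀ = D⁻¹ := by
      rw [Matrix.transpose_nonsing_inv, hDsymm.eq]
    have hsymmD : D⁻¹.vecMul u = D⁻¹.mulVec u := by
      rw [← mulVec_transpose, hDsymm']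
    rw [Matrix.smul_apply, aux_entry, hsymmD, smul_eq_mul, ← hs0]
    rw [inv_mul_cancel₀ hD1, inv_one, one_mul, sq, mul_inv]
    ring
  rw [htarget]
  exact hlim.congr' (key.mono fun _ h => h.symm)
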